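/- Let G be a subgroup of the alternating group A₇ on {1,...,7} that acts transitively on the 7 points and contains a subgroup isomorphic to the alternating group A₅. Then G = A₇. -/
import Mathlib

set_option maxRecDepth 20000

theorem stmt10 (G : Subgroup (Equiv.Perm (Fin 7)))
    (hle : G ≤ alternatingGroup (Fin 7))
    (htrans : ∀ x y : Fin 7, ∃ g ∈ G, g x = y)
    (hA5 : ∃ H : Subgroup (Equiv.Perm (Fin 7)), H ≤ G ∧
      Nonempty (H ≃* alternatingGroup (Fin 5))) :
    G = alternatingGroup (Fin 7) := by
  classical
  haveI : Fact (Nat.Prime 7) := ⟨by norm_num⟩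
  -- cardinality of A₇
  have hcardA : Nat.card (alternatingGroup (Fin 7)) = 2520 := by
    have h2 := two_mul_card_alternatingGroup (α := Fin 7)
    rw [Fintype.card_perm, Fintype.card_fin, ← Nat.card_eq_fintype_card,
      show Nat.factorial 7 = 5040 from rfl] at h2
    omega
  -- 7 divides |G|
  have h7 : 7 ∣ Nat.card G := by
    haveI : MulAction.IsPretransitive G (Fin 7) := by
      constructor
      intro x y
      obtain ⟨g, hg, hgx⟩ := htrans x y
      exact ⟨⟨g, hg⟩, hgx⟩
    have hidx := MulAction.index_stabilizer_of_transitive (↥G) (0 : Fin 7)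
    rw [Nat.card_eq_fintype_card, Fintype.card_fin] at hidx
    have hdvd := Subgroup.index_dvd_card (MulAction.stabilizer (↥G) (0 : Fin 7))
    rwa [hidx] at hdvd
  -- 60 divides |G|
  have h60 : 60 ∣ Nat.card G := by
    obtain ⟨H, hHG, ⟨e⟩⟩ := hA5
    have hc5 : Nat.card (alternatingGroup (Fin 5)) = 60 := by
      have h2 := two_mul_card_alternatingGroup (α := Fin 5)
      rw [Fintype.card_perm, Fintype.card_fin, ← Nat.card_eq_fintype_card,
        show Nat.factorial 5 = 120 from rfl] at h2
      omega
    have hcardH : Nat.card H = 60 := by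
      rw [Nat.card_congr e.toEquiv, hc5]
    exact hcardH ▸ Subgroup.card_dvd_of_le hHG
  have h420 : 420 ∣ Nat.card G :=
    (Nat.Coprime.mul_dvd_of_dvd_of_dvd (by norm_num) h7 h60 : 7 * 60 ∣ _)
  -- pass to the subgroup of A₇
  set K := G.subgroupOf (alternatingGroup (Fin 7)) with hKdef
  have hcardK : Nat.card K = Nat.card G :=
    Nat.card_congr (Subgroup.subgroupOfEquivOfLe hle).toEquiv
  have hKA : Nat.card K * K.index = 2520 := by
    rw [Subgroup.card_mul_index, hcardA]
  have hidx6 : K.index ∣ 6 := by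
    obtain ⟨m, hm⟩ : 420 ∣ Nat.card K := hcardK ▸ h420
    have h420' : 420 * (m * K.index) = 420 * 6 := by
      rw [← mul_assoc, ← hm, hKA]
    have h6 : m * K.index = 6 := by omega
    exact Dvd.intro_left m h6
  -- every element of order 7 lies in G
  have hS : ∀ σ : Equiv.Perm (Fin 7), orderOf σ = 7 → σ ∈ G := by
    intro σ hord
    have hpow : σ ^ 7 = 1 := by
      have := pow_orderOf_eq_one σ; rwa [hord] at this
    have hσA : σ ∈ alternatingGroup (Fin 7) := by
      rw [Equiv.Perm.mem_alternatingGroup]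
      have hs : Equiv.Perm.sign σ ^ 7 = 1 := by
        rw [← map_pow, hpow, map_one]
      rcases Int.units_eq_one_or (Equiv.Perm.sign σ) with h | h
      · exact h
      · rw [h] at hs; exact absurd hs (by decide)
    set σ' : alternatingGroup (Fin 7) := ⟨σ, hσA⟩ with hσ'def
    have hord' : orderOf σ' = 7 := by rw [hσ'def, Subgroup.orderOf_mk, hord]
    set φ := MulAction.toPermHom (alternatingGroup (Fin 7))
      (alternatingGroup (Fin 7) ⧸ K) with hφdef
    have hker : σ' ∈ φ.ker := by
      rw [MonoidHom.mem_ker]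
      have hd := orderOf_map_dvd φ σ'
      rw [hord'] at hd
      rcases (Nat.Prime.eq_one_or_self_of_dvd (by norm_num) _ hd) with h1 | h7'
      · exact orderOf_eq_one_iff.mp h1
      · exfalso
        haveI : Fintype (alternatingGroup (Fin 7) ⧸ K) := Fintype.ofFinite _
        have hdvd := orderOf_dvd_natCard (φ σ')
        rw [h7', Nat.card_eq_fintype_card, Fintype.card_perm] at hdvd
        have hq : Fintype.card (alternatingGroup (Fin 7) ⧸ K) = K.index := by
          rw [← Nat.card_eq_fintype_card]; rfl
        rw [hq] at hdvd
        have hle6 : K.index ≤ 6 := Nat.le_of_dvd (by norm_num) hidx6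
        have := (Nat.Prime.dvd_factorial (by norm_num)).mp hdvd
        omega
    have hσ'K : σ' ∈ K := by
      have hcore : σ' ∈ K.normalCore := by
        rw [Subgroup.normalCore_eq_ker]; exact hker
      exact K.normalCore_le hcore
    exact (Subgroup.mem_subgroupOf).mp hσ'K
  -- the subgroup generated by order-7 elements
  set M := Subgroup.closure {σ : Equiv.Perm (Fin 7) | orderOf σ = 7} with hMdef
  have hMG : M ≤ G := (Subgroup.closure_le _).2 fun σ hσ => hS σ hσ
  have hMnormal : M.Normal := by
    constructor
    intro n hn g
    induction hn using Subgroup.closure_induction with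
    | mem x hx =>
      apply Subgroup.subset_closure
      have hx' : orderOf x = 7 := hx
      show orderOf (g * x * g⁻¹) = 7
      exact (orderOf_injective (MulAut.conj g).toMonoidHom
        (MulAut.conj g).injective x).trans hx'
    | one => simpa using Subgroup.one_mem M
    | mul x y hx hy ihx ihy =>
      rw [show g * (x * y) * g⁻¹ = (g * x * g⁻¹) * (g * y * g⁻¹) by group]
      exact Subgroup.mul_mem M ihx ihy
    | inv x hx ih =>
      rw [show g * x⁻¹ * g⁻¹ = (g * x * g⁻¹)⁻¹ by group]
      exact Subgroup.inv_mem M ih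
  -- an explicit 3-cycle in M
  set c1 : Equiv.Perm (Fin 7) := finRotate 7 with hc1def
  set t : Equiv.Perm (Fin 7) := Equiv.swap 0 1 * Equiv.swap 0 2 with htdef
  set c2 : Equiv.Perm (Fin 7) := c1⁻¹ * t with hc2def
  have hc1 : orderOf c1 = 7 := orderOf_eq_prime (by decide) (by decide)
  have hc2 : orderOf c2 = 7 := orderOf_eq_prime (by decide) (by decide)
  have htM : t ∈ M := by
    have ht' : t = c1 * c2 := by rw [hc2def, ← mul_assoc, mul_inv_cancel, one_mul]
    rw [ht']
    exact Subgroup.mul_mem M (Subgroup.subset_closure hc1)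
      (Subgroup.subset_closure hc2)
  have ht3 : Equiv.Perm.IsThreeCycle t :=
    Equiv.Perm.isThreeCycle_swap_mul_swap_same (by decide) (by decide) (by decide)
  -- A₇ ≤ M
  have hAM : alternatingGroup (Fin 7) ≤ M := by
    rw [← Equiv.Perm.closure_three_cycles_eq_alternating]
    apply (Subgroup.closure_le _).2
    intro τ hτ
    have hconj : IsConj t τ :=
      Equiv.Perm.isConj_of_cycleType_eq (by rw [ht3.cycleType, hτ.cycleType])
    obtain ⟨g, hg⟩ := isConj_iff.mp hconj
    rw [← hg]
    exact hMnormal.conj_mem t htM g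
  exact le_antisymm hle (hAM.trans hMG)
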